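/- Assume μ_n < 0 (the defocusing case) and let β̄ be the unique zero of g in (μ_n, ∞). Then for every β ∈ ℝ \ {μ_1, …, μ_n}, one has (β − μ_j)·g(β) > 0 for all j = 1, …, n if and only if β < μ_1 or μ_n < β < β̄. -/
import Mathlib


open Set Finset

/-- Defocusing case: the positivity condition `(β - μⱼ)·g(β) > 0` for all `j` holds
precisely for `β < μ₁` or `μₙ < β < β̄`, where `β̄` is the unique zero of `g` in `(μₙ, ∞)`. -/
theorem defocusing_branch_interval (n : ℕ) (hn : 2 ≤ n) (μ : Fin n → ℝ) (hμ : Monotone μ)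
    (g : ℝ → ℝ)
    (hg : ∀ β : ℝ, (∀ j, β ≠ μ j) → g β = 1 + β * ∑ j, 1 / (μ j - β))
    (hdef : μ ⟨n - 1, by omega⟩ < 0)
    (βb : ℝ) (hβb : μ ⟨n - 1, by omega⟩ < βb) (hzero : g βb = 0)
    (huniq : ∀ β' : ℝ, μ ⟨n - 1, by omega⟩ < β' → g β' = 0 → β' = βb)
    (β : ℝ) (hβ : ∀ j, β ≠ μ j) :
    (∀ j, 0 < (β - μ j) * g β) ↔
      (β < μ ⟨0, by omega⟩ ∨ (μ ⟨n - 1, by omega⟩ < β ∧ β < βb)) := by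
  have hn1 : n - 1 < n := by omega
  have h0n : 0 < n := by omega
  set N : Fin n := ⟨n - 1, hn1⟩ with hN
  set Z : Fin n := ⟨0, h0n⟩ with hZ
  haveI : Nonempty (Fin n) := ⟨Z⟩
  have hle : ∀ j, μ j ≤ μ N := by
    intro j
    exact hμ (by simp [hN, Fin.le_def]; omega)
  have hge : ∀ j, μ Z ≤ μ j := by
    intro j
    exact hμ (by simp [hZ, Fin.le_def])
  have hneg : ∀ j, μ j < 0 := fun j => lt_of_le_of_lt (hle j) hdef
  -- rewritten form of g
  have key : ∀ x : ℝ, (∀ j, x ≠ μ j) → g x = 1 - n - ∑ j, μ j / (x - μ j) := by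
    intro x hx
    rw [hg x hx, Finset.mul_sum]
    have : ∀ j : Fin n, x * (1 / (μ j - x)) = -1 - μ j / (x - μ j) := by
      intro j
      have h1 : μ j - x ≠ 0 := fun h => hx j (by linarith [sub_eq_zero.mp h])
      have h2 : x - μ j ≠ 0 := fun h => hx j (sub_eq_zero.mp h)
      field_simp
      ring
    rw [Finset.sum_congr rfl fun j _ => this j]
    rw [Finset.sum_sub_distrib]
    simp
    ring
  -- strict decrease on (μ N, ∞)
  have hanti : ∀ a b : ℝ, μ N < a → a < b → g b < g a := by
    intro a b ha hab
    have ha' : ∀ j, a ≠ μ j := fun j => (lt_of_le_of_lt (hle j) ha).ne'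
    have hb' : ∀ j, b ≠ μ j := fun j => (lt_of_le_of_lt (hle j) (ha.trans hab)).ne'
    rw [key a ha', key b hb']
    have hsum : ∑ j, μ j / (a - μ j) < ∑ j, μ j / (b - μ j) := by
      apply Finset.sum_lt_sum_of_nonempty Finset.univ_nonempty
      intro j _
      have haj : 0 < a - μ j := by have := hle j; linarith
      have hbj : 0 < b - μ j := by linarith
      rw [div_lt_div_iff₀ haj hbj]
      nlinarith [hneg j]
    linarith
  -- g is negative below μ Z
  have hlow : β < μ Z → g β < 0 := by
    intro hβZ
    rw [key β hβ]
    have hsum : 0 ≤ ∑ j, μ j / (β - μ j) := by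
      apply Finset.sum_nonneg
      intro j _
      have h1 : μ j < 0 := hneg j
      have h2 : β - μ j < 0 := by have := hge j; linarith
      exact le_of_lt (div_pos_of_neg_of_neg h1 h2)
    have : (2 : ℝ) ≤ (n : ℝ) := by exact_mod_cast hn
    linarith
  constructor
  · intro h
    have hgne : g β ≠ 0 := by
      intro h0
      have := h Z
      rw [h0, mul_zero] at this
      exact lt_irrefl 0 this
    rcases lt_or_gt_of_ne hgne with hgneg | hgpos
    · -- g β < 0 : all β - μ j < 0
      left
      have hall : β < μ Z := by
        by_contra hcon
        push_neg at hcon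
        have hZne : β ≠ μ Z := hβ Z
        have : 0 < β - μ Z := by cases lt_or_eq_of_le hcon with
          | inl h' => linarith
          | inr h' => exact absurd h'.symm hZne
        have := h Z
        nlinarith
      exact hall
    · -- g β > 0 : all β - μ j > 0, so β > μ N; then β < βb
      right
      have hN' : μ N < β := by
        by_contra hcon
        push_neg at hcon
        have : β - μ N < 0 := lt_of_le_of_ne (by linarith) (sub_ne_zero.mpr (hβ N))
        have := h N
        nlinarith
      refine ⟨hN', ?_⟩
      by_contra hcon
      push_neg at hcon
      rcases lt_or_eq_of_le hcon with h' | h'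
      · have := hanti βb β hβb h'
        rw [hzero] at this
        linarith
      · rw [← h', hzero] at hgpos
        exact lt_irrefl 0 hgpos
  · rintro (hlt | ⟨h1, h2⟩)
    · intro j
      have hgneg := hlow hlt
      have : β - μ j < 0 := by have := hge j; linarith
      exact mul_pos_of_neg_of_neg this hgneg
    · intro j
      have hgpos : 0 < g β := by
        have := hanti β βb h1 h2
        rw [hzero] at this
        linarith
      have : 0 < β - μ j := by have := hle j; linarith
      exact mul_pos this hgpos
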